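/- Let N ∈ ℕ, let B be a subgroup of ℤ^N, and let γ ∈ ℤ^N be such that the set {b ∈ B : all coordinates of b+γ are ≥ 0} is finite, so that the Γ-series 𝓕_γ is a polynomial. Then for every index i, the partial derivative ∂𝓕_γ/∂z_i equals 𝓕_{γ−e_i}, where e_i ∈ ℤ^N is the i-th unit vector (the finiteness condition for γ−e_i follows from that for γ). -/

import Mathlib

open MvPolynomial

/-- The term `z^β / β!` of a Γ-series: it is the monomial `z^β / ∏ᵢ βᵢ!` when all
coordinates of `β` are nonnegative, and `0` otherwise. -/
noncomputable def gammaTerm (N : ℕ) (β : Fin N → ℤ) : MvPolynomial (Fin N) ℚ :=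
  if ∀ i, 0 ≤ β i then
    (∏ i, ((β i).toNat.factorial : ℚ))⁻¹ • monomial (Finsupp.equivFunOnFinite.symm fun i => (β i).toNat) 1
  else 0

/-- The Γ-series `𝓕_γ = Σ_{b ∈ B, b+γ ≥ 0} z^{b+γ}/∏ᵢ (bᵢ+γᵢ)!` of a lattice
`B ≤ ℤ^N` with shift `γ`, as a polynomial over `ℚ` (defined via `finsum`, which is the
actual sum whenever the family has finite support). -/
noncomputable def GammaSeries (N : ℕ) (B : AddSubgroup (Fin N → ℤ)) (γ : Fin N → ℤ) :
    MvPolynomial (Fin N) ℚ :=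
  ∑ᶠ b ∈ (B : Set (Fin N → ℤ)), gammaTerm N (b + γ)

lemma gammaTerm_ne_zero_imp (N : ℕ) (β : Fin N → ℤ)
    (h : gammaTerm N β ≠ 0) : ∀ i, 0 ≤ β i := by
  by_contra hc
  simp [gammaTerm, hc] at h

lemma pderiv_gammaTerm (N : ℕ) (β : Fin N → ℤ) (i : Fin N) :
    pderiv i (gammaTerm N β) = gammaTerm N (β - Pi.single i 1) := by
  unfold gammaTerm
  by_cases h : ∀ j, 0 ≤ β j
  · by_cases hi : 0 < β i
    · have h' : ∀ j, 0 ≤ (β - Pi.single i 1 : Fin N → ℤ) j := by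
        intro j
        rcases eq_or_ne j i with rfl | hj
        · simp; omega
        · simpa [Pi.single_apply, hj] using h j
      rw [if_pos h, if_pos h', Derivation.map_smul, pderiv_monomial]
      have hd : (Finsupp.equivFunOnFinite.symm fun j => (β j).toNat) - Finsupp.single i 1
          = Finsupp.equivFunOnFinite.symm fun j => ((β - Pi.single i 1 : Fin N → ℤ) j).toNat := by
        ext j
        rcases eq_or_ne j i with rfl | hj
        · simp [Int.pred_toNat]
        · simp [Finsupp.single_apply, hj.symm, Pi.single_apply, hj]
      rw [hd]
      rw [smul_monomial, smul_monomial]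
      congr 1
      have hne : ((β i).toNat : ℚ) ≠ 0 := by
        have : 0 < (β i).toNat := by omega
        positivity
      have hfact : (β i).toNat.factorial = (β i).toNat * ((β i).toNat - 1).factorial := by
        exact (Nat.mul_factorial_pred (by omega)).symm
      have hprod : (∏ j, ((β j).toNat.factorial : ℚ))
          = ((β i).toNat : ℚ) * ∏ j, (((β - Pi.single i 1 : Fin N → ℤ) j).toNat.factorial : ℚ) := by
        have key : ∀ j, ((β j).toNat.factorial : ℚ)
            = (if j = i then ((β i).toNat : ℚ) else 1) * (((β - Pi.single i 1 : Fin N → ℤ) j).toNat.factorial : ℚ) := by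
          intro j
          rcases eq_or_ne j i with rfl | hj
          · rw [if_pos rfl, hfact]
            push_cast
            congr 2
            simp [Int.pred_toNat]
          · simp [Pi.single_apply, hj]
        rw [Finset.prod_congr rfl (fun j _ => key j), Finset.prod_mul_distrib]
        congr 1
        simp
      have hsimp : (Finsupp.equivFunOnFinite.symm fun j => (β j).toNat) i = (β i).toNat := by
        simp
      rw [hsimp, hprod, mul_inv]
      field_simp
      simp only [smul_eq_mul]
      field_simp
    · have hi0 : β i = 0 := le_antisymm (not_lt.mp hi) (h i)
      have h' : ¬ ∀ j, 0 ≤ (β - Pi.single i 1 : Fin N → ℤ) j := by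
        intro hc
        have := hc i
        simp [hi0] at this
      rw [if_pos h, if_neg h', Derivation.map_smul, pderiv_monomial]
      have : (Finsupp.equivFunOnFinite.symm fun j => (β j).toNat) i = 0 := by simp [hi0]
      simp [this]
  · have h' : ¬ ∀ j, 0 ≤ (β - Pi.single i 1 : Fin N → ℤ) j := by
      intro hc
      apply h
      intro j
      have := hc j
      rcases eq_or_ne j i with rfl | hj
      · simp at this; omega
      · simpa [Pi.single_apply, hj] using this
    rw [if_neg h, if_neg h', map_zero]

/-- If the set `{b ∈ B : b+γ ≥ 0}` is finite (so that `𝓕_γ` is a polynomial), then for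
every index `i` one has `∂𝓕_γ/∂z_i = 𝓕_{γ − e_i}`, where `e_i` is the `i`-th unit vector. -/
theorem pderiv_gammaSeries (N : ℕ) (B : AddSubgroup (Fin N → ℤ)) (γ : Fin N → ℤ)
    (hfin : {b : Fin N → ℤ | b ∈ B ∧ ∀ i, 0 ≤ b i + γ i}.Finite) (i : Fin N) :
    pderiv i (GammaSeries N B γ) = GammaSeries N B (γ - Pi.single i 1) := by
  classical
  have hsupp : (Function.support fun b =>
      Set.indicator (B : Set (Fin N → ℤ)) (fun b => gammaTerm N (b + γ)) b).Finite := by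
    apply hfin.subset
    intro b hb
    rw [Function.mem_support] at hb
    by_cases hbB : b ∈ B
    · rw [Set.indicator_of_mem hbB] at hb
      exact ⟨hbB, fun j => by simpa using gammaTerm_ne_zero_imp N (b + γ) hb j⟩
    · exact absurd (Set.indicator_of_notMem hbB _) hb
  unfold GammaSeries
  rw [finsum_mem_def, finsum_mem_def]
  refine ((pderiv (R := ℚ) i).toLinearMap.toAddMonoidHom.map_finsum hsupp).trans ?_
  apply finsum_congr
  intro b
  by_cases hbB : b ∈ (B : Set (Fin N → ℤ))
  · rw [Set.indicator_of_mem hbB, Set.indicator_of_mem hbB]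
    show pderiv i (gammaTerm N (b + γ)) = _
    rw [pderiv_gammaTerm]
    congr 1
    abel
  · rw [Set.indicator_of_notMem hbB, Set.indicator_of_notMem hbB]
    exact map_zero _
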